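/- Let ψ be convex with ψ(0)=ψ(1)=0 and suppose that for q > 1, Assumptions A₁ and B^{(q)}(0) hold (i.e. ∃ ε₁ > 0 with ψ(1+ε₁) < ε₁, and ∃ ε₂ > 0 with ψ(q(1+ε₂)) finite and ψ(q(1+ε₂)) − (1+ε₂)ψ(q) < ε₂). Then Assumption A_q also holds, i.e. there exists ε > 0 with ψ(q(1+ε)) < q(1+ε) − 1. -/

import Mathlib

open EReal

/-- For `q > 1`, if `ψ` is convex with `ψ 0 = ψ 1 = 0` and Assumptions `A₁`
(`∃ ε₁ > 0, ψ(1+ε₁) < ε₁`) and `B^{(q)}(0)`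
(`∃ ε₂ > 0, ψ(q(1+ε₂)) < ∞ ∧ ψ(q(1+ε₂)) - (1+ε₂)ψ(q) < ε₂`) hold, then Assumption
`A_q` holds: there is `ε > 0` with `ψ(q(1+ε)) < q(1+ε) - 1`. -/
theorem assumptionA_of_assumptionA_one_and_B (ψ : ℝ → EReal)
    (hconv : ∀ x y : ℝ, 0 ≤ x → 0 ≤ y → ∀ t : ℝ, 0 ≤ t → t ≤ 1 →
      ψ (t * x + (1 - t) * y) ≤ (t : EReal) * ψ x + ((1 - t : ℝ) : EReal) * ψ y)
    (h0 : ψ 0 = 0) (h1 : ψ 1 = 0) (q : ℝ) (hq : 1 < q)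
    (hA1 : ∃ ε₁ : ℝ, 0 < ε₁ ∧ ψ (1 + ε₁) < ((ε₁ : ℝ) : EReal))
    (hB : ∃ ε₂ : ℝ, 0 < ε₂ ∧ ψ (q * (1 + ε₂)) < ⊤ ∧
        ψ (q * (1 + ε₂)) < ((ε₂ : ℝ) : EReal) + ((1 + ε₂ : ℝ) : EReal) * ψ q) :
    ∃ ε : ℝ, 0 < ε ∧ ψ (q * (1 + ε)) < ((q * (1 + ε) - 1 : ℝ) : EReal) := by
  obtain ⟨ε, hε, htop, hlt⟩ := hB
  refine ⟨ε, hε, ?_⟩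
  have hq0 : (0:ℝ) < q := by linarith
  have hD0 : (0:ℝ) < q * (1 + ε) - 1 := by nlinarith
  have ht0 : (0:ℝ) ≤ (q - 1) / (q * (1 + ε) - 1) :=
    div_nonneg (by linarith) hD0.le
  have ht1 : (q - 1) / (q * (1 + ε) - 1) ≤ 1 := by
    rw [div_le_one hD0]; nlinarith
  have hx : (q - 1) / (q * (1 + ε) - 1) * (q * (1 + ε)) +
      (1 - (q - 1) / (q * (1 + ε) - 1)) * 1 = q := by
    field_simp
    ring
  have hconvq := hconv (q * (1 + ε)) 1 (by positivity) (by norm_num)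
    ((q - 1) / (q * (1 + ε) - 1)) ht0 ht1
  rw [hx, h1, mul_zero, add_zero] at hconvq
  have key : ψ (q * (1 + ε)) <
      ((ε : ℝ) : EReal) + ((1 + ε : ℝ) : EReal) *
        ((((q - 1) / (q * (1 + ε) - 1) : ℝ) : EReal) * ψ (q * (1 + ε))) := by
    refine hlt.trans_le (add_le_add_right ?_ _)
    exact mul_le_mul_of_nonneg_left hconvq (by exact_mod_cast (by positivity : (0:ℝ) ≤ 1 + ε))
  rcases eq_bot_or_bot_lt (ψ (q * (1 + ε))) with hbot | hbot
  · rw [hbot]; exact bot_lt_iff_ne_bot.2 (coe_ne_bot _)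
  · lift ψ (q * (1 + ε)) to ℝ using ⟨htop.ne, hbot.ne'⟩ with a ha
    rw [← EReal.coe_mul, ← EReal.coe_mul, ← EReal.coe_add] at key
    have hr : a < ε + (1 + ε) * ((q - 1) / (q * (1 + ε) - 1) * a) := by
      exact_mod_cast key
    rw [EReal.coe_lt_coe_iff]
    have htD : (q - 1) / (q * (1 + ε) - 1) * (q * (1 + ε) - 1) = q - 1 :=
      div_mul_cancel₀ _ hD0.ne'
    have h2 : a * (q * (1 + ε) - 1) <
        (ε + (1 + ε) * ((q - 1) / (q * (1 + ε) - 1) * a)) * (q * (1 + ε) - 1) :=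
      mul_lt_mul_of_pos_right hr hD0
    have h3 : (ε + (1 + ε) * ((q - 1) / (q * (1 + ε) - 1) * a)) * (q * (1 + ε) - 1)
        = ε * (q * (1 + ε) - 1) + (1 + ε) * a * (q - 1) := by
      linear_combination (1 + ε) * a * htD
    rw [h3] at h2
    nlinarith [h2, hε]
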